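/- Let c be symmetric positive edge costs on the complete graph with N ≥ 3 vertices satisfying the strict triangle inequality c_{uv} + c_{kv} > c_{ku} for all triples of distinct vertices u, k, v. Then there exists α₀ ∈ ℝ such that for every α ≤ α₀, for every spanning tree T that is not a Hamiltonian path there exists a Hamiltonian path whose CST cost at parameter α is strictly lower than that of T. -/

import Mathlib

open Classical

/-- `mu G i j` : the number of vertices in the connected component of `i` in the graph `G`
with the edge `{i, j}` removed, divided by `N`. -/
noncomputable def mu {N : ℕ} (G : SimpleGraph (Fin N)) (i j : Fin N) : ℝ :=
  (((G.deleteEdges {s(i, j)}).connectedComponentMk i).supp.ncard : ℝ) / N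

/-- The CST cost of a graph `G` with edge costs `c` at parameter `α`. -/
noncomputable def cstCost {N : ℕ} (G : SimpleGraph (Fin N)) (c : Fin N → Fin N → ℝ)
    (α : ℝ) : ℝ :=
  (1 / 2) * ∑ i, ∑ j, if G.Adj i j then (mu G i j * (1 - mu G i j)) ^ α * c i j else 0

open SimpleGraph Finset

/-- The double-sum appearing in `cstCost` (without the `1/2` factor). -/
noncomputable def eF {N : ℕ} (G : SimpleGraph (Fin N)) (c : Fin N → Fin N → ℝ) (α : ℝ) : ℝ :=
  ∑ i, ∑ j, if G.Adj i j then (mu G i j * (1 - mu G i j)) ^ α * c i j else 0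

lemma cstCost_eq_eF {N : ℕ} (G : SimpleGraph (Fin N)) (c : Fin N → Fin N → ℝ) (α : ℝ) :
    cstCost G c α = (1 / 2) * eF G c α := rfl

section Walks
variable {V : Type*}

lemma reachable_invariant {G : SimpleGraph V} {p : V → Prop}
    (hp : ∀ x y, G.Adj x y → (p x ↔ p y)) {u v : V} (h : G.Reachable u v) : p u ↔ p v := by
  obtain ⟨w⟩ := h
  induction w with
  | nil => rfl
  | cons h q ih => exact (hp _ _ h).trans ih

lemma walk_delete_or {G : SimpleGraph V} (a b : V) {v x : V} (w : G.Walk v x) :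
    (G.deleteEdges {s(a, b)}).Reachable v x ∨ (G.deleteEdges {s(a, b)}).Reachable v a ∨
      (G.deleteEdges {s(a, b)}).Reachable v b := by
  induction w with
  | nil => exact Or.inl (Reachable.refl _)
  | @cons p q r hpq w ih =>
      by_cases he : s(p, q) = s(a, b)
      · rw [Sym2.eq_iff] at he
        rcases he with ⟨h1, h2⟩ | ⟨h1, h2⟩
        · exact Or.inr (Or.inl (h1 ▸ Reachable.refl p))
        · exact Or.inr (Or.inr (h1 ▸ Reachable.refl p))
      · have hadj : (G.deleteEdges {s(a, b)}).Adj p q := by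
          rw [SimpleGraph.deleteEdges_adj]
          exact ⟨hpq, by simpa using he⟩
        rcases ih with h1 | h1 | h1
        · exact Or.inl (hadj.reachable.trans h1)
        · exact Or.inr (Or.inl (hadj.reachable.trans h1))
        · exact Or.inr (Or.inr (hadj.reachable.trans h1))

lemma reachable_delete_or {G : SimpleGraph V} {a b v : V} (h : G.Reachable v a) :
    (G.deleteEdges {s(a, b)}).Reachable v a ∨ (G.deleteEdges {s(a, b)}).Reachable v b := by
  obtain ⟨w⟩ := h
  rcases walk_delete_or a b w with h1 | h1 | h1
  · exact Or.inl h1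
  · exact Or.inl h1
  · exact Or.inr h1

lemma eq_of_reachable_isolated {G : SimpleGraph V} {u v : V}
    (h : ∀ x, ¬ G.Adj u x) (hr : G.Reachable u v) : u = v := by
  obtain ⟨w⟩ := hr
  cases w with
  | nil => rfl
  | cons h' q => exact absurd h' (h _)

end Walks

section LeafComp

variable {N : ℕ} {T : SimpleGraph (Fin N)}

lemma leaf_isolated {u w : Fin N} (hu : T.neighborSet u = {w}) (x : Fin N) :
    ¬ (T.deleteEdges {s(u, w)}).Adj u x := by
  intro hx
  rw [SimpleGraph.deleteEdges_adj] at hx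
  have hxw : x = w := by
    have : x ∈ T.neighborSet u := hx.1
    rwa [hu, Set.mem_singleton_iff] at this
  exact hx.2 (by simp [hxw])

lemma leaf_supp_self {u w : Fin N} (hu : T.neighborSet u = {w}) :
    ((T.deleteEdges {s(u, w)}).connectedComponentMk u).supp = {u} := by
  ext v
  simp only [ConnectedComponent.mem_supp_iff, ConnectedComponent.eq, Set.mem_singleton_iff]
  constructor
  · intro h
    exact (eq_of_reachable_isolated (leaf_isolated hu) h.symm).symm
  · rintro rfl; rfl

lemma leaf_supp_other (hconn : T.Connected) {u w : Fin N} (hu : T.neighborSet u = {w}) :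
    ((T.deleteEdges {s(u, w)}).connectedComponentMk w).supp = {u}ᶜ := by
  have hadj : T.Adj u w := by
    have : w ∈ T.neighborSet u := by rw [hu]; rfl
    exact this
  ext v
  simp only [ConnectedComponent.mem_supp_iff, ConnectedComponent.eq, Set.mem_compl_iff,
    Set.mem_singleton_iff]
  constructor
  · intro h
    rintro rfl
    exact hadj.ne (eq_of_reachable_isolated (leaf_isolated hu) h)
  · intro hvu
    rcases reachable_delete_or (hconn.preconnected v u) with h1 | h1
    · exact absurd (eq_of_reachable_isolated (leaf_isolated hu) h1.symm).symm hvu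
    · exact h1

lemma ncard_compl_singleton (u : Fin N) : ({u}ᶜ : Set (Fin N)).ncard = N - 1 := by
  rw [Set.ncard_eq_toFinset_card']
  simp [Finset.card_compl]

lemma mu_leaf (hconn : T.Connected) {u w : Fin N} (hu : T.neighborSet u = {w}) :
    mu T u w = 1 / N ∧ mu T w u = ((N : ℝ) - 1) / N := by
  have hN : 0 < N := Fin.pos u
  constructor
  · rw [mu, leaf_supp_self hu, Set.ncard_singleton]
    norm_num
  · rw [mu, show s(w, u) = s(u, w) from Sym2.eq_swap, leaf_supp_other hconn hu,
      ncard_compl_singleton]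
    rw [Nat.cast_sub hN]
    norm_num

end LeafComp

section Leaves

variable {N : ℕ} {T : SimpleGraph (Fin N)}

lemma degree_pos_of_connected (hconn : T.Connected) (hN : 2 ≤ N) (v : Fin N) :
    0 < T.degree v := by
  rw [T.degree_pos_iff_exists_adj]
  obtain ⟨u, hu⟩ := Fintype.exists_ne_of_one_lt_card (by simp; omega) v
  obtain ⟨w⟩ := hconn.preconnected v u
  cases w with
  | nil => exact absurd rfl hu.symm
  | cons h' q => exact ⟨_, h'⟩

lemma exists_three_leaves (hT : T.IsTree) (hN : 3 ≤ N) (w0 : Fin N)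
    (hw0 : 3 ≤ T.degree w0) :
    ∃ u1 u2 u3 : Fin N, u1 ≠ u2 ∧ u1 ≠ u3 ∧ u2 ≠ u3 ∧
      T.degree u1 = 1 ∧ T.degree u2 = 1 ∧ T.degree u3 = 1 := by
  classical
  have hsum : ∑ v, T.degree v = 2 * (N - 1) := by
    have hE := hT.card_edgeFinset
    rw [Fintype.card_fin] at hE
    rw [T.sum_degrees_eq_twice_card_edges]
    omega
  have hdegpos : ∀ v, 0 < T.degree v := degree_pos_of_connected hT.isConnected (by omega)
  set L : Finset (Fin N) := Finset.univ.filter (fun v => T.degree v = 1) with hL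
  have hpt : ∀ v : Fin N,
      (2 : ℤ) - (if T.degree v = 1 then 1 else 0) + (if v = w0 then 1 else 0)
        ≤ (T.degree v : ℤ) := by
    intro v
    have h1 := hdegpos v
    by_cases hv : v = w0
    · subst hv
      have : ¬ T.degree v = 1 := by omega
      simp [this]
      omega
    · by_cases hd : T.degree v = 1 <;> simp [hv, hd] <;> omega
  have hsum2 : (2 : ℤ) * N - L.card + 1 ≤ 2 * (N - 1 : ℕ) := by
    calc (2 : ℤ) * N - L.card + 1
        = ∑ v : Fin N, ((2 : ℤ) - (if T.degree v = 1 then 1 else 0)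
            + (if v = w0 then 1 else 0)) := by
          rw [Finset.sum_add_distrib, Finset.sum_sub_distrib]
          simp [Finset.sum_ite_eq', hL, Finset.sum_boole]
          ring
      _ ≤ ∑ v : Fin N, (T.degree v : ℤ) := Finset.sum_le_sum (fun v _ => hpt v)
      _ = ((∑ v, T.degree v : ℕ) : ℤ) := by push_cast; rfl
      _ = _ := by rw [hsum]; push_cast; ring_nf
  have hcard : 2 < L.card := by
    have : (1 : ℤ) ≤ N - 1 := by
      have : 1 ≤ N := by omega
      push_cast [Nat.cast_sub this]; omega
    push_cast [Nat.cast_sub (show 1 ≤ N by omega)] at hsum2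
    omega
  obtain ⟨a, b, c, ha, hb, hc, hab, hac, hbc⟩ := Finset.two_lt_card_iff.mp hcard
  rw [hL, Finset.mem_filter] at ha hb hc
  exact ⟨a, b, c, hab, hac, hbc, ha.2, hb.2, hc.2⟩

lemma neighborSet_singleton_of_degree_one {u : Fin N} (h : T.degree u = 1) :
    ∃ w, T.neighborSet u = {w} := by
  classical
  have : (T.neighborFinset u).card = 1 := by rwa [T.card_neighborFinset_eq_degree]
  obtain ⟨w, hw⟩ := Finset.card_eq_one.mp this
  refine ⟨w, ?_⟩
  rw [← Set.coe_toFinset (T.neighborSet u), ← SimpleGraph.neighborFinset_def, hw]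
  simp

lemma pair_closed {u w : Fin N} (hu : T.neighborSet u = {w}) (hw : T.neighborSet w = {u})
    {x y : Fin N} (wk : T.Walk x y) (hx : x = u ∨ x = w) : y = u ∨ y = w := by
  induction wk with
  | nil => exact hx
  | @cons p q r hpq wk ih =>
      apply ih
      rcases hx with rfl | rfl
      · have : q ∈ T.neighborSet p := hpq
        rw [hu] at this
        exact Or.inr this
      · have : q ∈ T.neighborSet p := hpq
        rw [hw] at this
        exact Or.inl this

lemma no_adjacent_leaves (hconn : T.Connected) (hN : 3 ≤ N) {u w : Fin N}
    (hu : T.neighborSet u = {w}) (hw : T.neighborSet w = {u}) : False := by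
  classical
  have hex : ∃ z : Fin N, z ∉ ({u, w} : Finset (Fin N)) := by
    by_contra hc
    push_neg at hc
    have hsub : (Finset.univ : Finset (Fin N)) ⊆ {u, w} := fun z _ => hc z
    have h1 := Finset.card_le_card hsub
    have h2 : ({u, w} : Finset (Fin N)).card ≤ 2 :=
      (Finset.card_insert_le _ _).trans (by simp)
    simp [Finset.card_univ] at h1
    omega
  obtain ⟨z, hz⟩ := hex
  obtain ⟨wk⟩ := hconn.preconnected u z
  have := pair_closed hu hw wk (Or.inl rfl)
  simp [Finset.mem_insert] at hz
  tauto

/-- a leaf's neighbor is not itself a leaf -/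
lemma hub_not_leaf (hconn : T.Connected) (hN : 3 ≤ N) {u w : Fin N}
    (hu : T.neighborSet u = {w}) : T.degree w ≠ 1 := by
  classical
  intro hdeg
  obtain ⟨x, hx⟩ := neighborSet_singleton_of_degree_one hdeg
  have hadj : T.Adj u w := by
    have : w ∈ T.neighborSet u := by rw [hu]; rfl
    exact this
  have hxu : x = u := by
    have : u ∈ T.neighborSet w := hadj.symm
    rw [hx] at this
    exact this.symm ▸ rfl
  rw [hxu] at hx
  exact no_adjacent_leaves hconn hN hu hx

end Leaves

section PathFacts

variable {N : ℕ}

lemma pg_side_invariant {k : ℕ} (hk : k + 1 < N) {u v : Fin N}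
    (h : ((pathGraph N).deleteEdges
      {s(⟨k, by omega⟩, ⟨k + 1, hk⟩)}).Reachable u v) :
    ((u : ℕ) ≤ k ↔ (v : ℕ) ≤ k) := by
  refine reachable_invariant (p := fun x : Fin N => (x : ℕ) ≤ k) ?_ h
  intro x y hxy
  rw [SimpleGraph.deleteEdges_adj] at hxy
  obtain ⟨hadj, hne⟩ := hxy
  rw [pathGraph_adj] at hadj
  simp only [Set.mem_singleton_iff] at hne
  have key1 : ¬((x : ℕ) = k ∧ (y : ℕ) = k + 1) := by
    rintro ⟨h1, h2⟩
    exact hne (by rw [Sym2.eq_iff]; left; exact ⟨Fin.ext h1, Fin.ext h2⟩)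
  have key2 : ¬((y : ℕ) = k ∧ (x : ℕ) = k + 1) := by
    rintro ⟨h1, h2⟩
    exact hne (by rw [Sym2.eq_iff]; right; exact ⟨Fin.ext h2, Fin.ext h1⟩)
  omega

lemma pg_reach_left {k : ℕ} (hk : k + 1 < N) (v : Fin N) (hv : (v : ℕ) ≤ k) :
    ((pathGraph N).deleteEdges {s(⟨k, by omega⟩, ⟨k + 1, hk⟩)}).Reachable v ⟨k, by omega⟩ := by
  have main : ∀ d (v : Fin N), (v : ℕ) ≤ k → k - (v : ℕ) = d →
      ((pathGraph N).deleteEdges {s(⟨k, by omega⟩, ⟨k + 1, hk⟩)}).Reachable v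
        ⟨k, by omega⟩ := by
    intro d
    induction d with
    | zero =>
        intro v hv hd
        have : v = (⟨k, by omega⟩ : Fin N) := Fin.ext (by simp; omega)
        rw [this]
    | succ n ih =>
        intro v hv hd
        have hvk : (v : ℕ) < k := by omega
        have hlt : (v : ℕ) + 1 < N := by omega
        have hadj : ((pathGraph N).deleteEdges
            {s(⟨k, by omega⟩, ⟨k + 1, hk⟩)}).Adj v ⟨(v : ℕ) + 1, hlt⟩ := by
          rw [SimpleGraph.deleteEdges_adj]
          refine ⟨by rw [pathGraph_adj]; left; rfl, ?_⟩
          simp only [Set.mem_singleton_iff]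
          intro hcon
          rw [Sym2.eq_iff] at hcon
          rcases hcon with ⟨h1, h2⟩ | ⟨h1, h2⟩
          · have := congrArg Fin.val h1; simp at this; omega
          · have := congrArg Fin.val h1; simp at this; omega
        exact hadj.reachable.trans (ih ⟨(v : ℕ) + 1, hlt⟩ (by simp; omega) (by simp; omega))
  exact main _ v hv rfl

lemma pg_reach_right {k : ℕ} (hk : k + 1 < N) (v : Fin N) (hv : k + 1 ≤ (v : ℕ)) :
    ((pathGraph N).deleteEdges {s(⟨k, by omega⟩, ⟨k + 1, hk⟩)}).Reachable v ⟨k + 1, hk⟩ := by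
  have main : ∀ d (v : Fin N), k + 1 ≤ (v : ℕ) → (v : ℕ) - (k + 1) = d →
      ((pathGraph N).deleteEdges {s(⟨k, by omega⟩, ⟨k + 1, hk⟩)}).Reachable v
        ⟨k + 1, hk⟩ := by
    intro d
    induction d with
    | zero =>
        intro v hv hd
        have : v = (⟨k + 1, hk⟩ : Fin N) := Fin.ext (by simp; omega)
        rw [this]
    | succ n ih =>
        intro v hv hd
        have hvk : k + 2 ≤ (v : ℕ) := by omega
        have hlt : (v : ℕ) - 1 < N := by omega
        have hadj : ((pathGraph N).deleteEdges
            {s(⟨k, by omega⟩, ⟨k + 1, hk⟩)}).Adj v ⟨(v : ℕ) - 1, hlt⟩ := by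
          rw [SimpleGraph.deleteEdges_adj]
          refine ⟨by rw [pathGraph_adj]; right; simp; omega, ?_⟩
          simp only [Set.mem_singleton_iff]
          intro hcon
          rw [Sym2.eq_iff] at hcon
          rcases hcon with ⟨h1, h2⟩ | ⟨h1, h2⟩
          · have := congrArg Fin.val h1; simp at this; omega
          · have := congrArg Fin.val h1; simp at this; omega
        exact hadj.reachable.trans (ih ⟨(v : ℕ) - 1, hlt⟩ (by simp; omega) (by simp; omega))
  exact main _ v hv rfl

lemma pg_supp_left {k : ℕ} (hk : k + 1 < N) :
    (((pathGraph N).deleteEdges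
      {s(⟨k, by omega⟩, ⟨k + 1, hk⟩)}).connectedComponentMk ⟨k, by omega⟩).supp
      = {v : Fin N | (v : ℕ) ≤ k} := by
  ext v
  simp only [ConnectedComponent.mem_supp_iff, ConnectedComponent.eq, Set.mem_setOf_eq]
  constructor
  · intro h
    have := pg_side_invariant hk h
    simp at this
    exact this
  · exact pg_reach_left hk v

lemma pg_supp_right {k : ℕ} (hk : k + 1 < N) :
    (((pathGraph N).deleteEdges
      {s(⟨k, by omega⟩, ⟨k + 1, hk⟩)}).connectedComponentMk ⟨k + 1, hk⟩).supp
      = {v : Fin N | k + 1 ≤ (v : ℕ)} := by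
  ext v
  simp only [ConnectedComponent.mem_supp_iff, ConnectedComponent.eq, Set.mem_setOf_eq]
  constructor
  · intro h
    have := pg_side_invariant hk h
    simp at this
    omega
  · exact pg_reach_right hk v

lemma pg_card_filter_le (k : ℕ) (hk : k + 1 ≤ N) :
    (Finset.univ.filter (fun v : Fin N => (v : ℕ) ≤ k)).card = k + 1 := by
  classical
  have : Finset.univ.filter (fun v : Fin N => (v : ℕ) ≤ k)
      = Finset.map (Fin.castLEEmb hk) Finset.univ := by
    ext x
    simp only [Finset.mem_filter, Finset.mem_univ, true_and, Finset.mem_map]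
    constructor
    · intro hx
      exact ⟨⟨(x : ℕ), by omega⟩, by simp [Fin.castLEEmb]⟩
    · rintro ⟨a, rfl⟩
      simp [Fin.castLEEmb]
      omega
  rw [this, Finset.card_map, Finset.card_univ, Fintype.card_fin]

lemma ncard_le_set (k : ℕ) (hk : k + 1 < N) : ({v : Fin N | (v : ℕ) ≤ k}).ncard = k + 1 := by
  classical
  rw [show {v : Fin N | (v : ℕ) ≤ k}
      = ↑(Finset.univ.filter (fun v : Fin N => (v : ℕ) ≤ k)) by ext; simp,
    Set.ncard_coe_finset, pg_card_filter_le k (by omega)]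

lemma ncard_ge_set (k : ℕ) (hk : k + 1 < N) :
    ({v : Fin N | k + 1 ≤ (v : ℕ)}).ncard = N - (k + 1) := by
  classical
  rw [show {v : Fin N | k + 1 ≤ (v : ℕ)}
      = ↑(Finset.univ.filter (fun v : Fin N => ¬ (v : ℕ) ≤ k)) by ext; simp,
    Set.ncard_coe_finset]
  have := Finset.card_filter_add_card_filter_not (s := (Finset.univ : Finset (Fin N)))
    (p := fun v : Fin N => (v : ℕ) ≤ k)
  rw [pg_card_filter_le k (by omega)] at this
  simp only [Finset.card_univ, Fintype.card_fin] at this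
  omega

lemma mu_pg_left {k : ℕ} (hk : k + 1 < N) :
    mu (pathGraph N) ⟨k, by omega⟩ ⟨k + 1, hk⟩ = ((k : ℝ) + 1) / N := by
  rw [mu, pg_supp_left hk, ncard_le_set k hk]
  push_cast
  ring

lemma mu_pg_right {k : ℕ} (hk : k + 1 < N) :
    mu (pathGraph N) ⟨k + 1, hk⟩ ⟨k, by omega⟩ = ((N : ℝ) - (k + 1)) / N := by
  rw [mu, show s((⟨k + 1, hk⟩ : Fin N), (⟨k, by omega⟩ : Fin N))
      = s((⟨k, by omega⟩ : Fin N), (⟨k + 1, hk⟩ : Fin N)) from Sym2.eq_swap,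
    pg_supp_right hk, ncard_ge_set k hk]
  rw [Nat.cast_sub (by omega)]
  push_cast
  ring

lemma pg_connected (hN : 0 < N) : (pathGraph N).Connected := by
  have : Nonempty (Fin N) := ⟨⟨0, hN⟩⟩
  exact ⟨pathGraph_preconnected N⟩

lemma pg_acyclic : (pathGraph N).IsAcyclic := by
  rw [isAcyclic_iff_forall_adj_isBridge]
  intro v w h
  have h' := h
  rw [pathGraph_adj] at h'
  rcases h' with h' | h'
  · have hk : (v : ℕ) + 1 < N := by rw [h']; exact w.isLt
    have hw : w = (⟨(v : ℕ) + 1, hk⟩ : Fin N) := Fin.ext h'.symm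
    subst hw
    refine isBridge_iff.mpr (fun hreach => ?_)
    have := pg_side_invariant hk (u := v) (v := ⟨(v : ℕ) + 1, hk⟩) hreach
    simp at this
  · have hk : (w : ℕ) + 1 < N := by rw [h']; exact v.isLt
    have hv : v = (⟨(w : ℕ) + 1, hk⟩ : Fin N) := Fin.ext h'.symm
    subst hv
    rw [show s((⟨(w : ℕ) + 1, hk⟩ : Fin N), w) = s(w, (⟨(w : ℕ) + 1, hk⟩ : Fin N)) from
      Sym2.eq_swap]
    refine isBridge_iff.mpr (fun hreach => ?_)
    have := pg_side_invariant hk (u := w) (v := ⟨(w : ℕ) + 1, hk⟩) hreach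
    simp at this

lemma pg_isTree (hN : 0 < N) : (pathGraph N).IsTree := ⟨pg_connected hN, pg_acyclic⟩

lemma pg_degree_le (v : Fin N) : ((pathGraph N).neighborSet v).ncard ≤ 2 := by
  classical
  set c1 : Fin N := if h : (v : ℕ) + 1 < N then ⟨(v : ℕ) + 1, h⟩ else v with hc1
  set c2 : Fin N := if h : 0 < (v : ℕ) then ⟨(v : ℕ) - 1, by omega⟩ else v with hc2
  have hsub : (pathGraph N).neighborSet v ⊆ {c1, c2} := by
    intro u hu
    rw [SimpleGraph.mem_neighborSet, pathGraph_adj] at hu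
    rcases hu with h | h
    · have h1 : (v : ℕ) + 1 < N := by have := u.isLt; omega
      refine Set.mem_insert_iff.mpr (Or.inl ?_)
      rw [hc1, dif_pos h1]
      exact Fin.ext (by simp; omega)
    · have h2 : 0 < (v : ℕ) := by omega
      refine Set.mem_insert_iff.mpr (Or.inr ?_)
      rw [hc2, dif_pos h2]
      exact Fin.ext (by simp; omega)
  calc ((pathGraph N).neighborSet v).ncard
      ≤ ({c1, c2} : Set (Fin N)).ncard := Set.ncard_le_ncard hsub (Set.toFinite _)
    _ ≤ 2 := by
        refine (Set.ncard_insert_le _ _).trans ?_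
        simp

end PathFacts

section MapTransfer

variable {N : ℕ} (e : Fin N ≃ Fin N) (G : SimpleGraph (Fin N))

lemma sym2_map_eq {a b i j : Fin N} :
    s(e a, e b) = s(e i, e j) ↔ s(a, b) = s(i, j) := by
  rw [Sym2.eq_iff, Sym2.eq_iff]
  simp [e.injective.eq_iff]

lemma map_deleteEdges (i j : Fin N) :
    (G.deleteEdges {s(i, j)}).map e.toEmbedding
      = (G.map e.toEmbedding).deleteEdges {s(e i, e j)} := by
  ext u v
  simp only [SimpleGraph.map_adj, SimpleGraph.deleteEdges_adj, Set.mem_singleton_iff]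
  constructor
  · rintro ⟨a, b, ⟨hab, hne⟩, rfl, rfl⟩
    exact ⟨⟨a, b, hab, rfl, rfl⟩, fun hcon => hne ((sym2_map_eq e).mp hcon)⟩
  · rintro ⟨⟨a, b, hab, rfl, rfl⟩, hne⟩
    exact ⟨a, b, ⟨hab, fun hcon => hne ((sym2_map_eq e).mpr hcon)⟩, rfl, rfl⟩

lemma supp_ncard_map (i : Fin N) :
    (((G.map e.toEmbedding).connectedComponentMk (e i)).supp).ncard
      = ((G.connectedComponentMk i).supp).ncard := by
  have himg : ((G.map e.toEmbedding).connectedComponentMk (e i)).supp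
      = e '' ((G.connectedComponentMk i).supp) := by
    ext v
    simp only [ConnectedComponent.mem_supp_iff, ConnectedComponent.eq, Set.mem_image]
    constructor
    · intro h
      refine ⟨e.symm v, ?_, by simp⟩
      have h' : (G.map e.toEmbedding).Reachable (e (e.symm v)) (e i) := by simpa using h
      exact (Iso.reachable_iff (φ := SimpleGraph.Iso.map e G)).mp h'
    · rintro ⟨a, ha, rfl⟩
      exact (Iso.reachable_iff (φ := SimpleGraph.Iso.map e G)).mpr ha
  rw [himg, Set.ncard_image_of_injective _ e.injective]

lemma mu_map (i j : Fin N) : mu (G.map e.toEmbedding) (e i) (e j) = mu G i j := by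
  rw [mu, mu, ← map_deleteEdges e G i j,
    supp_ncard_map e (G.deleteEdges {s(i, j)}) i]

lemma eF_map (c : Fin N → Fin N → ℝ) (α : ℝ) :
    eF (G.map e.toEmbedding) c α = eF G (fun i j => c (e i) (e j)) α := by
  rw [eF, eF]
  refine Eq.trans (Equiv.sum_comp e _).symm ?_
  refine Finset.sum_congr rfl fun a _ => ?_
  refine Eq.trans (Equiv.sum_comp e _).symm ?_
  refine Finset.sum_congr rfl fun b _ => ?_
  rw [mu_map]
  have hadj : (G.map e.toEmbedding).Adj (e a) (e b) ↔ G.Adj a b :=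
    SimpleGraph.map_adj_apply
  simp only [hadj]

lemma neighborSet_map (v : Fin N) :
    (G.map e.toEmbedding).neighborSet (e v) = e '' (G.neighborSet v) := by
  ext u
  simp only [SimpleGraph.mem_neighborSet, SimpleGraph.map_adj,
    Set.mem_image]
  constructor
  · rintro ⟨a, b, hab, ha, rfl⟩
    exact ⟨b, by rwa [e.injective ha] at hab, rfl⟩
  · rintro ⟨b, hb, rfl⟩
    exact ⟨v, b, hb, rfl, rfl⟩

lemma isTree_map (hG : G.IsTree) : (G.map e.toEmbedding).IsTree := by
  constructor
  · exact (Iso.connected_iff (SimpleGraph.Iso.map e G)).mp hG.isConnected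
  · rw [isAcyclic_iff_forall_adj_isBridge]
    intro x y hxy
    rw [SimpleGraph.map_adj] at hxy
    obtain ⟨a, b, hab, rfl, rfl⟩ := hxy
    refine isBridge_iff.mpr (fun hreach => ?_)
    have hreach' : ((G.deleteEdges {s(a, b)}).map e.toEmbedding).Reachable
        (e.toEmbedding a) (e.toEmbedding b) := by
      rw [map_deleteEdges e G a b]
      exact hreach
    have : (G.deleteEdges {s(a, b)}).Reachable a b :=
      (Iso.reachable_iff (φ := SimpleGraph.Iso.map e (G.deleteEdges {s(a, b)}))).mp hreach'
    exact (isBridge_iff.mp (isAcyclic_iff_forall_adj_isBridge.mp hG.IsAcyclic hab)) this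

end MapTransfer

section Perm

lemma exists_perm {N : ℕ} (hN : 4 ≤ N) (a b c d : Fin N)
    (hab : a ≠ b) (hac : a ≠ c) (had : a ≠ d) (hbc : b ≠ c) (hbd : b ≠ d) (hcd : c ≠ d) :
    ∃ σ : Equiv.Perm (Fin N), σ ⟨0, by omega⟩ = a ∧ σ ⟨1, by omega⟩ = b ∧
      σ ⟨N - 2, by omega⟩ = c ∧ σ ⟨N - 1, by omega⟩ = d := by
  set p0 : Fin N := ⟨0, by omega⟩
  set p1 : Fin N := ⟨1, by omega⟩
  set p2 : Fin N := ⟨N - 2, by omega⟩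
  set p3 : Fin N := ⟨N - 1, by omega⟩
  have h01 : p0 ≠ p1 := by simp [p0, p1, Fin.ext_iff]
  have h02 : p0 ≠ p2 := by simp [p0, p2, Fin.ext_iff]; omega
  have h03 : p0 ≠ p3 := by simp [p0, p3, Fin.ext_iff]; omega
  have h12 : p1 ≠ p2 := by simp [p1, p2, Fin.ext_iff]; omega
  have h13 : p1 ≠ p3 := by simp [p1, p3, Fin.ext_iff]; omega
  have h23 : p2 ≠ p3 := by simp [p2, p3, Fin.ext_iff]; omega
  -- step 1
  set σ1 : Equiv.Perm (Fin N) := Equiv.swap p0 a with hσ1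
  have e1 : σ1 p0 = a := Equiv.swap_apply_left _ _
  -- step 2
  set t2 : Fin N := σ1.symm b with ht2
  have ht2ne : t2 ≠ p0 := by
    intro h
    apply hab
    rw [← e1, ← h, ht2, Equiv.apply_symm_apply]
  set σ2 : Equiv.Perm (Fin N) := (Equiv.swap p1 t2).trans σ1 with hσ2
  have e2b : σ2 p1 = b := by
    simp [hσ2, Equiv.swap_apply_left, ht2, Equiv.apply_symm_apply]
  have e2a : σ2 p0 = a := by
    rw [hσ2]
    simp only [Equiv.trans_apply]
    rw [Equiv.swap_apply_of_ne_of_ne h01 (Ne.symm ht2ne), e1]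
  -- step 3
  set t3 : Fin N := σ2.symm c with ht3
  have ht3ne0 : t3 ≠ p0 := by
    intro h
    apply hac
    rw [← e2a, ← h, ht3, Equiv.apply_symm_apply]
  have ht3ne1 : t3 ≠ p1 := by
    intro h
    apply hbc
    rw [← e2b, ← h, ht3, Equiv.apply_symm_apply]
  set σ3 : Equiv.Perm (Fin N) := (Equiv.swap p2 t3).trans σ2 with hσ3
  have e3c : σ3 p2 = c := by
    simp [hσ3, Equiv.swap_apply_left, ht3, Equiv.apply_symm_apply]
  have e3a : σ3 p0 = a := by
    rw [hσ3]
    simp only [Equiv.trans_apply]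
    rw [Equiv.swap_apply_of_ne_of_ne h02 (Ne.symm ht3ne0), e2a]
  have e3b : σ3 p1 = b := by
    rw [hσ3]
    simp only [Equiv.trans_apply]
    rw [Equiv.swap_apply_of_ne_of_ne h12 (Ne.symm ht3ne1), e2b]
  -- step 4
  set t4 : Fin N := σ3.symm d with ht4
  have ht4ne0 : t4 ≠ p0 := by
    intro h
    apply had
    rw [← e3a, ← h, ht4, Equiv.apply_symm_apply]
  have ht4ne1 : t4 ≠ p1 := by
    intro h
    apply hbd
    rw [← e3b, ← h, ht4, Equiv.apply_symm_apply]
  have ht4ne2 : t4 ≠ p2 := by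
    intro h
    apply hcd
    rw [← e3c, ← h, ht4, Equiv.apply_symm_apply]
  set σ4 : Equiv.Perm (Fin N) := (Equiv.swap p3 t4).trans σ3 with hσ4
  have e4d : σ4 p3 = d := by
    simp [hσ4, Equiv.swap_apply_left, ht4, Equiv.apply_symm_apply]
  have e4a : σ4 p0 = a := by
    rw [hσ4]
    simp only [Equiv.trans_apply]
    rw [Equiv.swap_apply_of_ne_of_ne h03 (Ne.symm ht4ne0), e3a]
  have e4b : σ4 p1 = b := by
    rw [hσ4]
    simp only [Equiv.trans_apply]
    rw [Equiv.swap_apply_of_ne_of_ne h13 (Ne.symm ht4ne1), e3b]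
  have e4c : σ4 p2 = c := by
    rw [hσ4]
    simp only [Equiv.trans_apply]
    rw [Equiv.swap_apply_of_ne_of_ne h23 (Ne.symm ht4ne2), e3c]
  exact ⟨σ4, e4a, e4b, e4c, e4d⟩

end Perm

section Bounds

variable {N : ℕ}

lemma mu_mem_Icc (G : SimpleGraph (Fin N)) (hN : 0 < N) (i j : Fin N) :
    0 ≤ mu G i j ∧ mu G i j ≤ 1 := by
  have hNr : (0 : ℝ) < N := by exact_mod_cast hN
  constructor
  · exact div_nonneg (by positivity) hNr.le
  · rw [mu, div_le_one hNr]
    have hsub : (((G.deleteEdges {s(i, j)}).connectedComponentMk i).supp) ⊆ Set.univ :=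
      Set.subset_univ _
    have := Set.ncard_le_ncard hsub Set.finite_univ
    rw [Set.ncard_univ, Nat.card_eq_fintype_card, Fintype.card_fin] at this
    exact_mod_cast this

lemma eF_term_nonneg (G : SimpleGraph (Fin N)) (hN : 0 < N) (c : Fin N → Fin N → ℝ)
    (hc : ∀ i j, i ≠ j → 0 ≤ c i j) (α : ℝ) (i j : Fin N) :
    0 ≤ if G.Adj i j then (mu G i j * (1 - mu G i j)) ^ α * c i j else 0 := by
  by_cases h : G.Adj i j
  · rw [if_pos h]
    obtain ⟨h0, h1⟩ := mu_mem_Icc G hN i j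
    exact mul_nonneg (Real.rpow_nonneg (mul_nonneg h0 (by linarith)) α) (hc i j h.ne)
  · rw [if_neg h]

lemma degree_eq_one_of_singleton (T : SimpleGraph (Fin N)) {u w : Fin N}
    (h : T.neighborSet u = {w}) : T.degree u = 1 := by
  classical
  rw [← SimpleGraph.card_neighborFinset_eq_degree]
  have hfin : T.neighborFinset u = {w} := by
    ext x
    rw [SimpleGraph.mem_neighborFinset, Finset.mem_singleton, ← SimpleGraph.mem_neighborSet,
      h, Set.mem_singleton_iff]
  rw [hfin, Finset.card_singleton]

lemma eF_tree_ge (hN : 3 ≤ N) (T : SimpleGraph (Fin N)) (hconn : T.Connected)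
    (c : Fin N → Fin N → ℝ) (hsymm : ∀ i j, c i j = c j i)
    (hc : ∀ i j, i ≠ j → 0 ≤ c i j) (α : ℝ)
    {u1 u2 u3 w1 w2 w3 : Fin N}
    (h12 : u1 ≠ u2) (h13 : u1 ≠ u3) (h23 : u2 ≠ u3)
    (hn1 : T.neighborSet u1 = {w1}) (hn2 : T.neighborSet u2 = {w2})
    (hn3 : T.neighborSet u3 = {w3}) :
    2 * (((N : ℝ) - 1) / (N : ℝ) ^ 2) ^ α * (c u1 w1 + c u2 w2 + c u3 w3) ≤ eF T c α := by
  classical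
  have hN0 : 0 < N := by omega
  have hNr : (0 : ℝ) < N := by exact_mod_cast hN0
  have hadj : ∀ {u w : Fin N}, T.neighborSet u = {w} → T.Adj u w := by
    intro u w h
    have : w ∈ T.neighborSet u := by rw [h]; rfl
    exact this
  have key : ∀ {u w u' w' : Fin N}, T.neighborSet u = {w} → T.neighborSet u' = {w'} →
      w ≠ u' := by
    intro u w u' w' h h' heq
    exact hub_not_leaf hconn hN h (heq ▸ degree_eq_one_of_singleton T h')
  have kw11 : w1 ≠ u1 := key hn1 hn1
  have kw12 : w1 ≠ u2 := key hn1 hn2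
  have kw13 : w1 ≠ u3 := key hn1 hn3
  have kw21 : w2 ≠ u1 := key hn2 hn1
  have kw22 : w2 ≠ u2 := key hn2 hn2
  have kw23 : w2 ≠ u3 := key hn2 hn3
  have kw31 : w3 ≠ u1 := key hn3 hn1
  have kw32 : w3 ≠ u2 := key hn3 hn2
  have kw33 : w3 ≠ u3 := key hn3 hn3
  have hterm : ∀ {u w : Fin N}, T.neighborSet u = {w} →
      ((if T.Adj u w then (mu T u w * (1 - mu T u w)) ^ α * c u w else 0)
        = (((N : ℝ) - 1) / (N : ℝ) ^ 2) ^ α * c u w) ∧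
      ((if T.Adj w u then (mu T w u * (1 - mu T w u)) ^ α * c w u else 0)
        = (((N : ℝ) - 1) / (N : ℝ) ^ 2) ^ α * c u w) := by
    intro u w h
    have ha := hadj h
    obtain ⟨hl, hr⟩ := mu_leaf hconn h
    have hNne : (N : ℝ) ≠ 0 := ne_of_gt hNr
    have hbase1 : 1 / (N : ℝ) * (1 - 1 / (N : ℝ)) = ((N : ℝ) - 1) / (N : ℝ) ^ 2 := by
      field_simp
    have hbase2 : ((N : ℝ) - 1) / (N : ℝ) * (1 - ((N : ℝ) - 1) / (N : ℝ))
        = ((N : ℝ) - 1) / (N : ℝ) ^ 2 := by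
      field_simp
      ring
    constructor
    · rw [if_pos ha, hl, hbase1]
    · rw [if_pos ha.symm, hr, hbase2, hsymm w u]
  set g : Fin N × Fin N → ℝ := fun p =>
    if T.Adj p.1 p.2 then (mu T p.1 p.2 * (1 - mu T p.1 p.2)) ^ α * c p.1 p.2 else 0 with hg
  have hEF : eF T c α = ∑ p ∈ Finset.univ ×ˢ Finset.univ, g p := by
    rw [eF, ← Finset.sum_product']
  set S : Finset (Fin N × Fin N) :=
    {(u1, w1), (w1, u1), (u2, w2), (w2, u2), (u3, w3), (w3, u3)} with hS
  have hsumS : ∑ p ∈ S, g p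
      = 2 * (((N : ℝ) - 1) / (N : ℝ) ^ 2) ^ α * (c u1 w1 + c u2 w2 + c u3 w3) := by
    rw [hS]
    rw [Finset.sum_insert (by
      simp only [Finset.mem_insert, Finset.mem_singleton, Prod.mk.injEq]
      push_neg
      exact ⟨fun h => absurd h.symm kw11, fun h _ => absurd h h12,
        fun h => absurd h.symm kw21, fun h _ => absurd h h13,
        fun h => absurd h.symm kw31⟩)]
    rw [Finset.sum_insert (by
      simp only [Finset.mem_insert, Finset.mem_singleton, Prod.mk.injEq]
      push_neg
      exact ⟨fun h => absurd h kw12, fun _ => h12,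
        fun h => absurd h kw13, fun _ => h13⟩)]
    rw [Finset.sum_insert (by
      simp only [Finset.mem_insert, Finset.mem_singleton, Prod.mk.injEq]
      push_neg
      exact ⟨fun h => absurd h.symm kw22, fun h _ => absurd h h23,
        fun h => absurd h.symm kw32⟩)]
    rw [Finset.sum_insert (by
      simp only [Finset.mem_insert, Finset.mem_singleton, Prod.mk.injEq]
      push_neg
      exact ⟨fun h => absurd h kw23, fun _ => h23⟩)]
    rw [Finset.sum_insert (by
      simp only [Finset.mem_singleton, Prod.mk.injEq]
      push_neg
      exact fun h => absurd h.symm kw33)]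
    rw [Finset.sum_singleton]
    have e1 := hterm hn1
    have e2 := hterm hn2
    have e3 := hterm hn3
    simp only [hg]
    rw [e1.1, e1.2, e2.1, e2.2, e3.1, e3.2]
    ring
  have hsub : S ⊆ Finset.univ ×ˢ Finset.univ := fun p _ =>
    Finset.mem_product.mpr ⟨Finset.mem_univ _, Finset.mem_univ _⟩
  have hle : ∑ p ∈ S, g p ≤ ∑ p ∈ Finset.univ ×ˢ Finset.univ, g p :=
    Finset.sum_le_sum_of_subset_of_nonneg hsub
      (fun p _ _ => eF_term_nonneg T hN0 c hc α p.1 p.2)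
  rw [hEF, ← hsumS]
  exact hle

lemma eF_path_eq (hN : 1 ≤ N) (c' : Fin N → Fin N → ℝ) (α : ℝ) :
    ∃ t : Fin N → Fin N → ℝ,
      (∀ u v, t u v = if (pathGraph N).Adj u v then
        (mu (pathGraph N) u v * (1 - mu (pathGraph N) u v)) ^ α * c' u v else 0) ∧
      eF (pathGraph N) c' α = ∑ m ∈ Finset.range (N - 1),
        ((if h : m + 1 < N then t ⟨m, by omega⟩ ⟨m + 1, h⟩ else 0)
          + (if h : 0 < m + 1 ∧ m + 1 < N then t ⟨m + 1, h.2⟩ ⟨m, by omega⟩ else 0)) := by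
  classical
  set t : Fin N → Fin N → ℝ := fun u v => if (pathGraph N).Adj u v then
    (mu (pathGraph N) u v * (1 - mu (pathGraph N) u v)) ^ α * c' u v else 0 with ht
  refine ⟨t, fun u v => rfl, ?_⟩
  set FA : ℕ → ℝ := fun m => if h : m + 1 < N then t ⟨m, by omega⟩ ⟨m + 1, h⟩ else 0 with hFA
  set FB : ℕ → ℝ := fun m => if h : 0 < m ∧ m < N then t ⟨m, h.2⟩ ⟨m - 1, by omega⟩ else 0
    with hFB
  have hsplit : ∀ u v : Fin N, t u v =
      (if (v : ℕ) = (u : ℕ) + 1 then t u v else 0)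
        + (if (u : ℕ) = (v : ℕ) + 1 then t u v else 0) := by
    intro u v
    by_cases h1 : (v : ℕ) = (u : ℕ) + 1 <;> by_cases h2 : (u : ℕ) = (v : ℕ) + 1
    · omega
    · rw [if_pos h1, if_neg h2, add_zero]
    · rw [if_neg h1, if_pos h2, zero_add]
    · have hna : ¬ (pathGraph N).Adj u v := by rw [pathGraph_adj]; omega
      rw [if_neg h1, if_neg h2, add_zero]
      simp only [ht]
      exact if_neg hna
  have hA : ∀ u : Fin N, (∑ v : Fin N, if (v : ℕ) = (u : ℕ) + 1 then t u v else 0)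
      = FA (u : ℕ) := by
    intro u
    simp only [hFA]
    by_cases h : (u : ℕ) + 1 < N
    · rw [dif_pos h]
      have hcond : ∀ v : Fin N, ((v : ℕ) = (u : ℕ) + 1) ↔ (v = ⟨(u : ℕ) + 1, h⟩) := fun v =>
        ⟨fun hv => Fin.ext hv, fun hv => by rw [hv]⟩
      calc (∑ v : Fin N, if (v : ℕ) = (u : ℕ) + 1 then t u v else 0)
          = ∑ v : Fin N, if v = ⟨(u : ℕ) + 1, h⟩ then t u v else 0 :=
            Finset.sum_congr rfl fun v _ => by rw [if_congr (hcond v) rfl rfl]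
        _ = t u ⟨(u : ℕ) + 1, h⟩ := by simp [Finset.sum_ite_eq']
    · rw [dif_neg h]
      apply Finset.sum_eq_zero
      intro v _
      rw [if_neg]
      have := v.isLt
      omega
  have hB : ∀ u : Fin N, (∑ v : Fin N, if (u : ℕ) = (v : ℕ) + 1 then t u v else 0)
      = FB (u : ℕ) := by
    intro u
    simp only [hFB]
    by_cases h : 0 < (u : ℕ)
    · rw [dif_pos ⟨h, u.isLt⟩]
      have hcond : ∀ v : Fin N, ((u : ℕ) = (v : ℕ) + 1) ↔ (v = ⟨(u : ℕ) - 1, by omega⟩) :=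
        fun v => ⟨fun hv => Fin.ext (by simp; omega), fun hv => by rw [hv]; simp; omega⟩
      calc (∑ v : Fin N, if (u : ℕ) = (v : ℕ) + 1 then t u v else 0)
          = ∑ v : Fin N, if v = ⟨(u : ℕ) - 1, by omega⟩ then t u v else 0 :=
            Finset.sum_congr rfl fun v _ => by rw [if_congr (hcond v) rfl rfl]
        _ = t u ⟨(u : ℕ) - 1, by omega⟩ := by simp [Finset.sum_ite_eq']
        _ = t ⟨(u : ℕ), u.isLt⟩ ⟨(u : ℕ) - 1, by omega⟩ := by congr
    · rw [dif_neg (by omega)]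
      apply Finset.sum_eq_zero
      intro v _
      rw [if_neg]
      omega
  have step1 : eF (pathGraph N) c' α = (∑ u : Fin N, FA (u : ℕ)) + ∑ u : Fin N, FB (u : ℕ) := by
    rw [eF]
    calc ∑ u, ∑ v, (if (pathGraph N).Adj u v then
          (mu (pathGraph N) u v * (1 - mu (pathGraph N) u v)) ^ α * c' u v else 0)
        = ∑ u : Fin N, ((∑ v : Fin N, if (v : ℕ) = (u : ℕ) + 1 then t u v else 0)
            + (∑ v : Fin N, if (u : ℕ) = (v : ℕ) + 1 then t u v else 0)) := by
          refine Finset.sum_congr rfl fun u _ => ?_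
          rw [← Finset.sum_add_distrib]
          exact Finset.sum_congr rfl fun v _ => hsplit u v
      _ = ∑ u : Fin N, (FA (u : ℕ) + FB (u : ℕ)) := by
          refine Finset.sum_congr rfl fun u _ => ?_
          rw [hA, hB]
      _ = _ := Finset.sum_add_distrib
  have hsumA : (∑ u : Fin N, FA (u : ℕ)) = ∑ m ∈ Finset.range (N - 1), FA m := by
    rw [Fin.sum_univ_eq_sum_range (fun m => FA m) N]
    rw [← Nat.sub_add_cancel hN, Finset.sum_range_succ]
    have : FA (N - 1) = 0 := by simp only [hFA]; rw [dif_neg (by omega)]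
    rw [Nat.sub_add_cancel hN, this, add_zero]
  have hsumB : (∑ u : Fin N, FB (u : ℕ)) = ∑ m ∈ Finset.range (N - 1), FB (m + 1) := by
    rw [Fin.sum_univ_eq_sum_range (fun m => FB m) N]
    rw [← Nat.sub_add_cancel hN, Finset.sum_range_succ']
    have : FB 0 = 0 := by simp only [hFB]; rw [dif_neg (by omega)]
    rw [this, add_zero]
    norm_num
  rw [step1, hsumA, hsumB, ← Finset.sum_add_distrib]
  refine Finset.sum_congr rfl fun m hm => ?_
  congr 1

lemma eF_path_le (hN : 4 ≤ N) (c' : Fin N → Fin N → ℝ) (α : ℝ) (hα : α ≤ 0)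
    (hsym : ∀ i j, c' i j = c' j i) (hnn : ∀ i j, i ≠ j → 0 ≤ c' i j)
    (cmax : ℝ) (hcm : ∀ i j, c' i j ≤ cmax) :
    eF (pathGraph N) c' α ≤
      2 * (((N : ℝ) - 1) / (N : ℝ) ^ 2) ^ α *
        (c' ⟨0, by omega⟩ ⟨1, by omega⟩ + c' ⟨N - 2, by omega⟩ ⟨N - 1, by omega⟩)
      + ((N : ℝ) - 3) * (2 * ((2 * ((N : ℝ) - 2)) / (N : ℝ) ^ 2) ^ α * cmax) := by
  classical
  have hNr : (0 : ℝ) < N := by exact_mod_cast (by omega : 0 < N)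
  have hNne : (N : ℝ) ≠ 0 := ne_of_gt hNr
  have hN4r : (4 : ℝ) ≤ N := by exact_mod_cast hN
  obtain ⟨t, htdef, hsum⟩ := eF_path_eq (by omega) c' α
  -- value of each edge term
  have hterm : ∀ (m : ℕ) (hm : m + 1 < N),
      (if h : m + 1 < N then t ⟨m, by omega⟩ ⟨m + 1, h⟩ else 0)
        + (if h : 0 < m + 1 ∧ m + 1 < N then t ⟨m + 1, h.2⟩ ⟨m, by omega⟩ else 0)
      = 2 * ((((m : ℝ) + 1) * ((N : ℝ) - ((m : ℝ) + 1)) / (N : ℝ) ^ 2) ^ α)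
          * c' ⟨m, by omega⟩ ⟨m + 1, hm⟩ := by
    intro m hm
    rw [dif_pos hm, dif_pos ⟨Nat.succ_pos m, hm⟩]
    have hadj1 : (pathGraph N).Adj ⟨m, by omega⟩ ⟨m + 1, hm⟩ := by
      rw [pathGraph_adj]; left; rfl
    have e1 : 1 - ((m : ℝ) + 1) / (N : ℝ) = ((N : ℝ) - ((m : ℝ) + 1)) / (N : ℝ) := by
      rw [sub_div, div_self hNne]
    have e2 : 1 - ((N : ℝ) - ((m : ℝ) + 1)) / (N : ℝ) = ((m : ℝ) + 1) / (N : ℝ) := by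
      rw [← e1]; ring
    have hX : (((m : ℝ) + 1) / (N : ℝ)) * (1 - ((m : ℝ) + 1) / (N : ℝ))
        = ((m : ℝ) + 1) * ((N : ℝ) - ((m : ℝ) + 1)) / (N : ℝ) ^ 2 := by
      rw [e1, div_mul_div_comm, pow_two]
    have hY : (((N : ℝ) - ((m : ℝ) + 1)) / (N : ℝ)) * (1 - ((N : ℝ) - ((m : ℝ) + 1)) / (N : ℝ))
        = ((m : ℝ) + 1) * ((N : ℝ) - ((m : ℝ) + 1)) / (N : ℝ) ^ 2 := by
      rw [e2, div_mul_div_comm, pow_two]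
      ring
    rw [htdef, htdef, if_pos hadj1, if_pos hadj1.symm]
    rw [mu_pg_left hm, mu_pg_right hm]
    push_cast
    rw [hX, hY, hsym ⟨m + 1, hm⟩ ⟨m, by omega⟩]
    ring
  rw [hsum]
  -- split the sum
  have h1 : N - 1 = (N - 2) + 1 := by omega
  have h2 : N - 2 = (N - 3) + 1 := by omega
  set f : ℕ → ℝ := fun m =>
    (if h : m + 1 < N then t ⟨m, by omega⟩ ⟨m + 1, h⟩ else 0)
      + (if h : 0 < m + 1 ∧ m + 1 < N then t ⟨m + 1, h.2⟩ ⟨m, by omega⟩ else 0) with hf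
  have hsplit : ∑ m ∈ Finset.range (N - 1), f m
      = f 0 + (∑ j ∈ Finset.range (N - 3), f (j + 1)) + f (N - 2) := by
    rw [h1, Finset.sum_range_succ, h2, Finset.sum_range_succ']
    rw [← h2]
    ring
  rw [hsplit]
  -- endpoint terms
  have hf0 : f 0 = 2 * (((N : ℝ) - 1) / (N : ℝ) ^ 2) ^ α * c' ⟨0, by omega⟩ ⟨1, by omega⟩ := by
    simp only [hf]
    have := hterm 0 (by omega)
    simp only at this
    rw [this]
    norm_num
  have hfend : f (N - 2)
      = 2 * (((N : ℝ) - 1) / (N : ℝ) ^ 2) ^ α * c' ⟨N - 2, by omega⟩ ⟨N - 1, by omega⟩ := by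
    simp only [hf]
    have hm : (N - 2) + 1 < N := by omega
    have := hterm (N - 2) hm
    simp only at this
    rw [this]
    have hcast : ((N - 2 : ℕ) : ℝ) = (N : ℝ) - 2 := by
      push_cast [Nat.cast_sub (show 2 ≤ N by omega)]
      ring
    have hidx : (⟨(N - 2) + 1, hm⟩ : Fin N) = ⟨N - 1, by omega⟩ := Fin.ext (by simp; omega)
    rw [hidx, hcast]
    norm_num
    left
    congr 1
    ring
  -- middle terms
  have hx2pos : (0 : ℝ) < 2 * ((N : ℝ) - 2) / (N : ℝ) ^ 2 := by
    apply div_pos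
    · linarith
    · positivity
  have hmid : ∀ j ∈ Finset.range (N - 3),
      f (j + 1) ≤ 2 * ((2 * ((N : ℝ) - 2)) / (N : ℝ) ^ 2) ^ α * cmax := by
    intro j hj
    rw [Finset.mem_range] at hj
    have hm : (j + 1) + 1 < N := by omega
    simp only [hf]
    have := hterm (j + 1) hm
    simp only at this
    rw [this]
    push_cast
    have hXge : (2 * ((N : ℝ) - 2)) / (N : ℝ) ^ 2
        ≤ (((j : ℝ) + 1 + 1) * ((N : ℝ) - ((j : ℝ) + 1 + 1)) / (N : ℝ) ^ 2) := by
      rw [div_le_div_iff_of_pos_right (by positivity)]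
      have hj1 : (1 : ℝ) ≤ (j : ℝ) + 1 := by
        have : (0 : ℝ) ≤ (j : ℝ) := Nat.cast_nonneg j
        linarith
      have hj2 : (j : ℝ) + 1 ≤ (N : ℝ) - 3 := by
        have : (j : ℝ) + 1 ≤ ((N - 3 : ℕ) : ℝ) := by exact_mod_cast hj
        rw [Nat.cast_sub (show 3 ≤ N by omega)] at this
        push_cast at this
        linarith
      nlinarith [mul_nonneg (by linarith : (0:ℝ) ≤ (j : ℝ) + 1 - 1)
        (by linarith : (0:ℝ) ≤ (N : ℝ) - 3 - ((j : ℝ) + 1))]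
    have hpow : (((j : ℝ) + 1 + 1) * ((N : ℝ) - ((j : ℝ) + 1 + 1)) / (N : ℝ) ^ 2) ^ α
        ≤ ((2 * ((N : ℝ) - 2)) / (N : ℝ) ^ 2) ^ α :=
      Real.rpow_le_rpow_of_nonpos hx2pos hXge hα
    have hc0 : 0 ≤ c' ⟨j + 1, by omega⟩ ⟨(j + 1) + 1, hm⟩ :=
      hnn _ _ (by simp [Fin.ext_iff])
    calc 2 * ((((j : ℝ) + 1 + 1) * ((N : ℝ) - ((j : ℝ) + 1 + 1)) / (N : ℝ) ^ 2) ^ α)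
          * c' ⟨j + 1, by omega⟩ ⟨(j + 1) + 1, hm⟩
        ≤ 2 * ((2 * ((N : ℝ) - 2)) / (N : ℝ) ^ 2) ^ α
            * c' ⟨j + 1, by omega⟩ ⟨(j + 1) + 1, hm⟩ := by
          apply mul_le_mul_of_nonneg_right _ hc0
          linarith
      _ ≤ 2 * ((2 * ((N : ℝ) - 2)) / (N : ℝ) ^ 2) ^ α * cmax := by
          apply mul_le_mul_of_nonneg_left (hcm _ _)
          positivity
  have hmidsum : ∑ j ∈ Finset.range (N - 3), f (j + 1)
      ≤ ((N : ℝ) - 3) * (2 * ((2 * ((N : ℝ) - 2)) / (N : ℝ) ^ 2) ^ α * cmax) := by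
    calc ∑ j ∈ Finset.range (N - 3), f (j + 1)
        ≤ (Finset.range (N - 3)).card •
            (2 * ((2 * ((N : ℝ) - 2)) / (N : ℝ) ^ 2) ^ α * cmax) :=
          Finset.sum_le_card_nsmul _ _ _ hmid
      _ = ((N : ℝ) - 3) * (2 * ((2 * ((N : ℝ) - 2)) / (N : ℝ) ^ 2) ^ α * cmax) := by
          rw [Finset.card_range, nsmul_eq_mul]
          congr 1
          rw [Nat.cast_sub (show 3 ≤ N by omega)]
          norm_num
  rw [hf0, hfend]
  have expand : 2 * (((N : ℝ) - 1) / (N : ℝ) ^ 2) ^ α *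
        (c' ⟨0, by omega⟩ ⟨1, by omega⟩ + c' ⟨N - 2, by omega⟩ ⟨N - 1, by omega⟩)
      = 2 * (((N : ℝ) - 1) / (N : ℝ) ^ 2) ^ α * c' ⟨0, by omega⟩ ⟨1, by omega⟩
        + 2 * (((N : ℝ) - 1) / (N : ℝ) ^ 2) ^ α * c' ⟨N - 2, by omega⟩ ⟨N - 1, by omega⟩ := by
    ring
  linarith [hmidsum, expand]

end Bounds

section Key

lemma ncard_neighborSet_eq_degree {N : ℕ} (G : SimpleGraph (Fin N)) (v : Fin N) :
    (G.neighborSet v).ncard = G.degree v := by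
  rw [← Nat.card_coe_set_eq, Nat.card_eq_fintype_card,
    SimpleGraph.card_neighborSet_eq_degree]

lemma key_lemma {N : ℕ} (hN : 4 ≤ N) (c : Fin N → Fin N → ℝ)
    (hsymm : ∀ i j, c i j = c j i) (hpos : ∀ i j, i ≠ j → 0 < c i j)
    (htri : ∀ u k v : Fin N, u ≠ k → u ≠ v → k ≠ v → c k u < c u v + c k v)
    (T : SimpleGraph (Fin N)) (hT : T.IsTree)
    (hbad : ¬ (∀ v : Fin N, (T.neighborSet v).ncard ≤ 2)) :
    ∃ α₀ : ℝ, ∀ α : ℝ, α ≤ α₀ →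
      ∃ P : SimpleGraph (Fin N), P.IsTree ∧ (∀ v : Fin N, (P.neighborSet v).ncard ≤ 2) ∧
        cstCost P c α < cstCost T c α := by
  classical
  have hN3 : 3 ≤ N := by omega
  have hNr : (0 : ℝ) < N := by exact_mod_cast (by omega : 0 < N)
  have hN4r : (4 : ℝ) ≤ N := by exact_mod_cast hN
  push_neg at hbad
  obtain ⟨w0, hw0⟩ := hbad
  have hw0deg : 3 ≤ T.degree w0 := by
    rw [← ncard_neighborSet_eq_degree]
    omega
  obtain ⟨u1, u2, u3, h12, h13, h23, hd1, hd2, hd3⟩ :=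
    exists_three_leaves hT hN3 w0 hw0deg
  obtain ⟨w1, hn1⟩ := neighborSet_singleton_of_degree_one hd1
  obtain ⟨w2, hn2⟩ := neighborSet_singleton_of_degree_one hd2
  obtain ⟨w3, hn3⟩ := neighborSet_singleton_of_degree_one hd3
  have hconn := hT.isConnected
  have hadj : ∀ {u w : Fin N}, T.neighborSet u = {w} → T.Adj u w := by
    intro u w h
    have : w ∈ T.neighborSet u := by rw [h]; rfl
    exact this
  have key : ∀ {u w u' w' : Fin N}, T.neighborSet u = {w} → T.neighborSet u' = {w'} →
      w ≠ u' := by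
    intro u w u' w' h h' heq
    exact hub_not_leaf hconn hN3 h (heq ▸ degree_eq_one_of_singleton T h')
  have kw11 : w1 ≠ u1 := key hn1 hn1
  have kw12 : w1 ≠ u2 := key hn1 hn2
  have kw13 : w1 ≠ u3 := key hn1 hn3
  have kw21 : w2 ≠ u1 := key hn2 hn1
  have kw22 : w2 ≠ u2 := key hn2 hn2
  have kw23 : w2 ≠ u3 := key hn2 hn3
  have kw31 : w3 ≠ u1 := key hn3 hn1
  have kw32 : w3 ≠ u2 := key hn3 hn2
  have kw33 : w3 ≠ u3 := key hn3 hn3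
  -- choose the endpoints of the path and the gap δ
  obtain ⟨a, b, cc, d, hab, hac, had, hbc, hbd, hcd, δ, hδ, hsum⟩ :
      ∃ a b cc d : Fin N, a ≠ b ∧ a ≠ cc ∧ a ≠ d ∧ b ≠ cc ∧ b ≠ d ∧ cc ≠ d ∧
        ∃ δ : ℝ, 0 < δ ∧ c a b + c cc d + δ ≤ c u1 w1 + c u2 w2 + c u3 w3 := by
    by_cases hww : w1 ≠ w2
    · refine ⟨u1, w1, w2, u2, (hadj hn1).ne, Ne.symm kw21, h12, hww, kw12, kw22,
        c u3 w3, hpos _ _ (hadj hn3).ne, ?_⟩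
      rw [hsymm w2 u2]
    · push_neg at hww
      by_cases hww3 : w1 ≠ w3
      · refine ⟨u1, w1, w3, u3, (hadj hn1).ne, Ne.symm kw31, h13, hww3, kw13, kw33,
          c u2 w2, hpos _ _ (hadj hn2).ne, ?_⟩
        rw [hsymm w3 u3]
        linarith
      · push_neg at hww3
        refine ⟨u1, w1, u3, u2, (hadj hn1).ne, h13, h12, kw13, kw12,
          Ne.symm h23, c u2 w2 + c u3 w3 - c u3 u2, ?_, by linarith⟩
        have htri' := htri u2 u3 w1 h23 (fun h => kw12 h.symm) (fun h => kw13 h.symm)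
        rw [← hww, ← hww3]
        linarith
  obtain ⟨σ, hσ0, hσ1, hσ2, hσ3⟩ := exists_perm hN a b cc d hab hac had hbc hbd hcd
  -- the Hamiltonian path
  set P : SimpleGraph (Fin N) := (pathGraph N).map σ.toEmbedding with hP
  have hPtree : P.IsTree := isTree_map σ (pathGraph N) (pg_isTree (by omega))
  have hPdeg : ∀ v : Fin N, (P.neighborSet v).ncard ≤ 2 := by
    intro v
    obtain ⟨x, rfl⟩ := σ.surjective v
    rw [hP, _root_.neighborSet_map, Set.ncard_image_of_injective _ σ.injective]
    exact pg_degree_le x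
  -- cost functions
  set c' : Fin N → Fin N → ℝ := fun i j => c (σ i) (σ j) with hc'
  have hsym' : ∀ i j, c' i j = c' j i := fun i j => hsymm _ _
  have hnn' : ∀ i j, i ≠ j → 0 ≤ c' i j := fun i j hij =>
    (hpos _ _ (fun h => hij (σ.injective h))).le
  have hne : Finset.Nonempty ((Finset.univ : Finset (Fin N)) ×ˢ Finset.univ) :=
    ⟨(a, a), Finset.mem_product.mpr ⟨Finset.mem_univ _, Finset.mem_univ _⟩⟩
  set cmax : ℝ := Finset.sup' _ hne (fun p : Fin N × Fin N => c p.1 p.2) with hcmax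
  have hcm : ∀ i j : Fin N, c i j ≤ cmax := fun i j =>
    Finset.le_sup' (f := fun p : Fin N × Fin N => c p.1 p.2) (b := (i, j))
      (Finset.mem_product.mpr ⟨Finset.mem_univ i, Finset.mem_univ j⟩)
  have hcm' : ∀ i j : Fin N, c' i j ≤ cmax := fun i j => hcm _ _
  have hcmaxpos : 0 < cmax := lt_of_lt_of_le (hpos a b hab) (hcm a b)
  -- constants
  set β : ℝ := ((N : ℝ) - 1) / (N : ℝ) ^ 2 with hβ
  set x2 : ℝ := 2 * ((N : ℝ) - 2) / (N : ℝ) ^ 2 with hx2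
  have hβpos : 0 < β := by rw [hβ]; apply div_pos (by linarith) (by positivity)
  have hx2pos : 0 < x2 := by rw [hx2]; apply div_pos (by linarith) (by positivity)
  set r : ℝ := x2 / β with hr'
  have hrpos : 0 < r := div_pos hx2pos hβpos
  have hr : 1 < r := by
    rw [hr', lt_div_iff₀ hβpos, one_mul, hβ, hx2]
    rw [div_lt_div_iff_of_pos_right (by positivity)]
    linarith
  have hβr : β * r = x2 := by
    rw [hr', mul_comm, div_mul_cancel₀ _ (ne_of_gt hβpos)]
  set M : ℝ := ((N : ℝ) - 3) * cmax with hM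
  -- choose α₀
  have ht : Filter.Tendsto (fun α : ℝ => M * r ^ α) Filter.atBot (nhds 0) := by
    have := (tendsto_rpow_atBot_of_base_gt_one r hr).const_mul M
    simpa using this
  have hev : ∀ᶠ α : ℝ in Filter.atBot, M * r ^ α < δ := ht.eventually (gt_mem_nhds hδ)
  have hev2 : ∀ᶠ α : ℝ in Filter.atBot, α ≤ 0 := Filter.eventually_le_atBot 0
  obtain ⟨α₀, hα₀⟩ := Filter.eventually_atBot.mp (hev.and hev2)
  refine ⟨α₀, fun α hα => ?_⟩
  obtain ⟨hrδ, hα0⟩ := hα₀ α hα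
  refine ⟨P, hPtree, hPdeg, ?_⟩
  rw [cstCost_eq_eF, cstCost_eq_eF]
  have hmain : eF P c α < eF T c α := by
    have hEP : eF P c α = eF (pathGraph N) c' α := eF_map σ (pathGraph N) c α
    have hβα : (0 : ℝ) < β ^ α := Real.rpow_pos_of_pos hβpos α
    have hrα : (0 : ℝ) < r ^ α := Real.rpow_pos_of_pos hrpos α
    have hx2α : x2 ^ α = β ^ α * r ^ α := by
      rw [← hβr, Real.mul_rpow hβpos.le hrpos.le]
    have hPbound := eF_path_le hN c' α hα0 hsym' hnn' cmax hcm'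
    rw [← hβ, ← hx2] at hPbound
    have e01 : c' ⟨0, by omega⟩ ⟨1, by omega⟩ = c a b := by
      rw [hc']
      simp only
      rw [hσ0, hσ1]
    have eend : c' ⟨N - 2, by omega⟩ ⟨N - 1, by omega⟩ = c cc d := by
      rw [hc']
      simp only
      rw [hσ2, hσ3]
    rw [e01, eend] at hPbound
    have hTbound := eF_tree_ge hN3 T hconn c hsymm (fun i j hij => (hpos i j hij).le) α
      h12 h13 h23 hn1 hn2 hn3
    rw [← hβ] at hTbound
    have hkey : ((N : ℝ) - 3) * (2 * x2 ^ α * cmax) < 2 * β ^ α * δ := by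
      have h2β : (0 : ℝ) < 2 * β ^ α := by positivity
      have := mul_lt_mul_of_pos_left hrδ h2β
      calc ((N : ℝ) - 3) * (2 * x2 ^ α * cmax)
          = 2 * β ^ α * (M * r ^ α) := by rw [hx2α, hM]; ring
        _ < 2 * β ^ α * δ := this
    have hsum' : 2 * β ^ α * (c a b + c cc d) + 2 * β ^ α * δ
        ≤ 2 * β ^ α * (c u1 w1 + c u2 w2 + c u3 w3) := by
      have h2β : (0 : ℝ) ≤ 2 * β ^ α := by positivity
      have := mul_le_mul_of_nonneg_left hsum h2β
      linarith [this]
    rw [hEP]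
    calc eF (pathGraph N) c' α
        ≤ 2 * β ^ α * (c a b + c cc d) + ((N : ℝ) - 3) * (2 * x2 ^ α * cmax) := hPbound
      _ < 2 * β ^ α * (c a b + c cc d) + 2 * β ^ α * δ := by linarith
      _ ≤ 2 * β ^ α * (c u1 w1 + c u2 w2 + c u3 w3) := hsum'
      _ ≤ eF T c α := hTbound
  linarith

end Key

/-- Under the strict triangle inequality, for `α` negative enough, every non-path spanning
tree is beaten by some Hamiltonian path (a spanning tree of maximum degree ≤ 2). -/
theorem cst_strict_triangle_path_beats_nonpath {N : ℕ} (hN : 3 ≤ N)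
    (c : Fin N → Fin N → ℝ)
    (hsymm : ∀ i j, c i j = c j i) (hpos : ∀ i j, i ≠ j → 0 < c i j)
    (htri : ∀ u k v : Fin N, u ≠ k → u ≠ v → k ≠ v → c k u < c u v + c k v) :
    ∃ α₀ : ℝ, ∀ α : ℝ, α ≤ α₀ →
      ∀ T : SimpleGraph (Fin N), T.IsTree →
        ¬ (∀ v : Fin N, (T.neighborSet v).ncard ≤ 2) →
        ∃ P : SimpleGraph (Fin N), P.IsTree ∧ (∀ v : Fin N, (P.neighborSet v).ncard ≤ 2) ∧
          cstCost P c α < cstCost T c α := by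
  classical
  by_cases hN4 : 4 ≤ N
  · have hchoice : ∀ T : SimpleGraph (Fin N), ∃ α₀ : ℝ,
        (T.IsTree ∧ ¬ (∀ v : Fin N, (T.neighborSet v).ncard ≤ 2)) →
        ∀ α : ℝ, α ≤ α₀ →
          ∃ P : SimpleGraph (Fin N), P.IsTree ∧ (∀ v : Fin N, (P.neighborSet v).ncard ≤ 2) ∧
            cstCost P c α < cstCost T c α := by
      intro T
      by_cases hQ : T.IsTree ∧ ¬ (∀ v : Fin N, (T.neighborSet v).ncard ≤ 2)
      · obtain ⟨α₀, h⟩ := key_lemma hN4 c hsymm hpos htri T hQ.1 hQ.2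
        exact ⟨α₀, fun _ => h⟩
      · exact ⟨0, fun h => absurd h hQ⟩
    choose g hg using hchoice
    refine ⟨Finset.univ.inf' ⟨⊥, Finset.mem_univ _⟩ g, ?_⟩
    intro α hα T hT hbad
    exact hg T ⟨hT, hbad⟩ α (hα.trans (Finset.inf'_le g (Finset.mem_univ T)))
  · refine ⟨0, fun α _ T hT hbad => absurd (fun v => ?_) hbad⟩
    have hsub : T.neighborSet v ⊆ {v}ᶜ := by
      intro u hu
      simp only [Set.mem_compl_iff, Set.mem_singleton_iff]
      exact (SimpleGraph.mem_neighborSet _ _ _ |>.mp hu).ne'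
    calc (T.neighborSet v).ncard ≤ ({v}ᶜ : Set (Fin N)).ncard :=
          Set.ncard_le_ncard hsub (Set.toFinite _)
      _ = N - 1 := ncard_compl_singleton v
      _ ≤ 2 := by omega
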